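/- Define x_± = ((a00^00 + a11^11) ± √((a00^00 − a11^11)² + 4 a01^01 a10^10))/2 and Λ_± = (a01^01 − a00^00 + x_±)(a00^00 + a01^01 − x_∓). If a01^01 ≠ 0 and x_+ ≠ x_−, then tr(Q_N^{(g)}) = (x_+^{N-1} Λ_+ − x_−^{N-1} Λ_−)/(a01^01 (x_+ − x_−)). -/
import Mathlib


open Matrix Kronecker

/-- Configuration space of `N` sites, each holding a state in `{0,1}`. -/
abbrev Conf (N : ℕ) := Fin N → Fin 2

/-- `Fin 2 × Conf N ≃ Conf (N+1)` by prepending the first bit. -/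
def confEquiv (N : ℕ) : Fin 2 × Conf N ≃ Conf (N + 1) :=
  Fin.consEquiv (fun _ => Fin 2)

/-- `(Fin 2 × Fin 2) × Conf N ≃ Conf (N+2)` by prepending the first two bits. -/
def confEquiv2 (N : ℕ) : (Fin 2 × Fin 2) × Conf N ≃ Conf (N + 2) :=
  (((Equiv.prodAssoc (Fin 2) (Fin 2) (Conf N)).trans
    ((Equiv.refl (Fin 2)).prodCongr (confEquiv N))).trans (confEquiv (N + 1)))

/-- The global operator `Q_N^{(g)}`, defined by `Q_1 = I_2` and
`Q_{N+1} = (I_2 ⊗ Q_N) (Q^{(l)} ⊗ I_{2^{N-1}})`. -/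
def Qg {R : Type*} [CommRing R] (Ql : Matrix (Fin 2 × Fin 2) (Fin 2 × Fin 2) R) :
    (N : ℕ) → Matrix (Conf N) (Conf N) R
  | 0 => 1
  | 1 => 1
  | (N + 2) =>
      (Matrix.reindex (confEquiv (N + 1)) (confEquiv (N + 1))
          ((1 : Matrix (Fin 2) (Fin 2) R) ⊗ₖ Qg Ql (N + 1))) *
      (Matrix.reindex (confEquiv2 N) (confEquiv2 N)
          (Ql ⊗ₖ (1 : Matrix (Conf N) (Conf N) R)))

/-- Top-left block `E`. -/
def blockTL {R : Type*} [CommRing R] {N : ℕ}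
    (M : Matrix (Conf (N + 1)) (Conf (N + 1)) R) : Matrix (Conf N) (Conf N) R :=
  Matrix.of fun x y => M (Fin.cons 0 x) (Fin.cons 0 y)

/-- Top-right block `F`. -/
def blockTR {R : Type*} [CommRing R] {N : ℕ}
    (M : Matrix (Conf (N + 1)) (Conf (N + 1)) R) : Matrix (Conf N) (Conf N) R :=
  Matrix.of fun x y => M (Fin.cons 0 x) (Fin.cons 1 y)

/-- Bottom-left block `G`. -/
def blockBL {R : Type*} [CommRing R] {N : ℕ}
    (M : Matrix (Conf (N + 1)) (Conf (N + 1)) R) : Matrix (Conf N) (Conf N) R :=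
  Matrix.of fun x y => M (Fin.cons 1 x) (Fin.cons 0 y)

/-- Bottom-right block `H`. -/
def blockBR {R : Type*} [CommRing R] {N : ℕ}
    (M : Matrix (Conf (N + 1)) (Conf (N + 1)) R) : Matrix (Conf N) (Conf N) R :=
  Matrix.of fun x y => M (Fin.cons 1 x) (Fin.cons 1 y)


/-- closed form of the trace. With a fixed complex square root `s` of
`(a₀₀⁰⁰ − a₁₁¹¹)² + 4 a₀₁⁰¹ a₁₀¹⁰`, `x_± = ((a₀₀⁰⁰+a₁₁¹¹) ± s)/2`,
`Λ_± = (a₀₁⁰¹ − a₀₀⁰⁰ + x_±)(a₀₀⁰⁰ + a₀₁⁰¹ − x_∓)`, if `a₀₁⁰¹ ≠ 0` and `xp ≠ xm`, then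
`tr Q_N^{(g)} = (xp^{N-1} Lp − xm^{N-1} Lm)/(a₀₁⁰¹ (xp − xm))`. -/

lemma confEquiv_apply' (N : ℕ) (i : Fin 2) (x : Conf N) :
    confEquiv N (i, x) = Fin.cons i x := rfl

lemma confEquiv_symm_cons (N : ℕ) (i : Fin 2) (x : Conf N) :
    (confEquiv N).symm (Fin.cons i x) = (i, x) := by
  rw [← confEquiv_apply', Equiv.symm_apply_apply]

lemma confEquiv2_apply' (N : ℕ) (i j : Fin 2) (x : Conf N) :
    confEquiv2 N ((i, j), x) = Fin.cons i (Fin.cons j x) := rfl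

lemma confEquiv2_symm_cons (N : ℕ) (i j : Fin 2) (x : Conf N) :
    (confEquiv2 N).symm (Fin.cons i (Fin.cons j x)) = ((i, j), x) := by
  rw [← confEquiv2_apply', Equiv.symm_apply_apply]

lemma Qg_apply {N : ℕ} (Ql : Matrix (Fin 2 × Fin 2) (Fin 2 × Fin 2) ℂ)
    (i j k l : Fin 2) (x y : Conf N) :
    Qg Ql (N + 2) (Fin.cons i (Fin.cons j x)) (Fin.cons k (Fin.cons l y)) =
      ∑ n : Fin 2, Qg Ql (N + 1) (Fin.cons j x) (Fin.cons n y) * Ql (i, n) (k, l) := by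
  rw [Qg, Matrix.mul_apply, ← Equiv.sum_comp (confEquiv2 N)]
  rw [Fintype.sum_prod_type, Fintype.sum_prod_type]
  simp only [confEquiv2_apply', Matrix.reindex_apply, Matrix.submatrix_apply,
    confEquiv_symm_cons, confEquiv2_symm_cons, Matrix.kroneckerMap_apply,
    Matrix.one_apply]
  simp [Finset.mul_sum, Finset.sum_ite_eq, Fin.sum_univ_two]

lemma trace_split {N : ℕ} (M : Matrix (Conf (N + 1)) (Conf (N + 1)) ℂ) :
    M.trace = ∑ j : Fin 2, ∑ x : Conf N, M (Fin.cons j x) (Fin.cons j x) := by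
  rw [Matrix.trace, ← Equiv.sum_comp (confEquiv N), Fintype.sum_prod_type]
  rfl

/-- partial diagonal sums -/
noncomputable def Dd (Ql : Matrix (Fin 2 × Fin 2) (Fin 2 × Fin 2) ℂ) (N : ℕ) (j : Fin 2) : ℂ :=
  ∑ x : Conf N, Qg Ql (N + 1) (Fin.cons j x) (Fin.cons j x)

lemma Dd_zero (Ql : Matrix (Fin 2 × Fin 2) (Fin 2 × Fin 2) ℂ) (j : Fin 2) :
    Dd Ql 0 j = 1 := by
  simp [Dd, Qg, Matrix.one_apply]

lemma Dd_succ (Ql : Matrix (Fin 2 × Fin 2) (Fin 2 × Fin 2) ℂ)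
    (hvan : ∀ i j k l : Fin 2, j ≠ l → Ql (k, l) (i, j) = 0) (N : ℕ) (j : Fin 2) :
    Dd Ql (N + 1) j = ∑ l : Fin 2, Dd Ql N l * Ql (j, l) (j, l) := by
  unfold Dd
  rw [← Equiv.sum_comp (confEquiv N)
    (fun x => Qg Ql (N + 1 + 1) (Fin.cons j x) (Fin.cons j x)), Fintype.sum_prod_type]
  refine Finset.sum_congr rfl fun l _ => ?_
  rw [Finset.sum_mul]
  refine Finset.sum_congr rfl fun x _ => ?_
  rw [confEquiv_apply', Qg_apply]
  rw [Finset.sum_eq_single l]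
  · intro n _ hn
    rw [hvan j l j n hn.symm, mul_zero]
  · intro h; exact absurd (Finset.mem_univ l) h

lemma trace_eq_Dd (Ql : Matrix (Fin 2 × Fin 2) (Fin 2 × Fin 2) ℂ) (N : ℕ) :
    (Qg Ql (N + 1)).trace = Dd Ql N 0 + Dd Ql N 1 := by
  rw [trace_split, Fin.sum_univ_two]; rfl


theorem stmt5 (Ql : Matrix (Fin 2 × Fin 2) (Fin 2 × Fin 2) ℂ) (hvan : ∀ i j k l : Fin 2, j ≠ l → Ql (k, l) (i, j) = 0) (s xp xm Lp Lm : ℂ)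
    (hs : s ^ 2 = (Ql (0, 0) (0, 0) - Ql (1, 1) (1, 1)) ^ 2
        + 4 * Ql (0, 1) (0, 1) * Ql (1, 0) (1, 0))
    (hxp : xp = ((Ql (0, 0) (0, 0) + Ql (1, 1) (1, 1)) + s) / 2)
    (hxm : xm = ((Ql (0, 0) (0, 0) + Ql (1, 1) (1, 1)) - s) / 2)
    (hLp : Lp = (Ql (0, 1) (0, 1) - Ql (0, 0) (0, 0) + xp)
        * (Ql (0, 0) (0, 0) + Ql (0, 1) (0, 1) - xm))
    (hLm : Lm = (Ql (0, 1) (0, 1) - Ql (0, 0) (0, 0) + xm)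
        * (Ql (0, 0) (0, 0) + Ql (0, 1) (0, 1) - xp))
    (ha : Ql (0, 1) (0, 1) ≠ 0) (hx : xp ≠ xm) (N : ℕ) :
    Matrix.trace (Qg Ql (N + 1)) =
      (xp ^ N * Lp - xm ^ N * Lm) / (Ql (0, 1) (0, 1) * (xp - xm)) := by
  set a := Ql (0, 0) (0, 0) with hadef
  set b := Ql (0, 1) (0, 1) with hbdef
  set c := Ql (1, 0) (1, 0) with hcdef
  set d := Ql (1, 1) (1, 1) with hddef
  have hsum : xp + xm = a + d := by rw [hxp, hxm]; ring
  have hprod : xp * xm = a * d - b * c := by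
    rw [hxp, hxm]; field_simp; linear_combination -hs
  have main : ∀ N : ℕ,
      Dd Ql N 0 * (xp - xm) = xp ^ N * (a - xm + b) + xm ^ N * (xp - a - b) ∧
      Dd Ql N 1 * (xp - xm) = xp ^ N * (c + d - xm) + xm ^ N * (xp - c - d) := by
    intro N
    induction N with
    | zero => constructor <;> · rw [Dd_zero]; ring
    | succ N ih =>
      constructor
      · rw [Dd_succ Ql hvan, Fin.sum_univ_two]
        linear_combination a * ih.1 + b * ih.2
          + (a + b) * (xm ^ N - xp ^ N) * hsum + (xp ^ N - xm ^ N) * hprod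
      · rw [Dd_succ Ql hvan, Fin.sum_univ_two]
        linear_combination c * ih.1 + d * ih.2
          + (c + d) * (xm ^ N - xp ^ N) * hsum + (xp ^ N - xm ^ N) * hprod
  rw [trace_eq_Dd, eq_div_iff (mul_ne_zero ha (sub_ne_zero.2 hx))]
  linear_combination b * (main N).1 + b * (main N).2 - xp ^ N * hLp + xm ^ N * hLm
    + (a + b) * (xm ^ N - xp ^ N) * hsum + (xp ^ N - xm ^ N) * hprod
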